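/- Let L be a frame. Let r_1, …, r_n and s_1, …, s_m be rationals, let a_1, …, a_n be pairwise disjoint complemented elements of L with a_1 ⊔ ⋯ ⊔ a_n = ⊤, and let b_1, …, b_m be pairwise disjoint complemented elements of L with b_1 ⊔ ⋯ ⊔ b_m = ⊤. Then (Σ_{i=1}^{n} r_i·χ_{a_i}) + (Σ_{j=1}^{m} s_j·χ_{b_j}) = Σ_{i=1}^{n} Σ_{j=1}^{m} (r_i + s_j)·χ_{a_i ⊓ b_j} (componentwise equality of pairs). In particular, the sum of two measurable simple functions is simple. -/

import Mathlib

/-- A pair of maps `u, v : ℚ → L`, encoding a real-valued function on the frame `L`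
via `f(p,—) = u p`, `f(—,q) = v q`. -/
structure MP (L : Type*) where
  u : ℚ → L
  v : ℚ → L

namespace MP

variable {L : Type*} [Order.Frame L]

/-- The order on pairs: `f ≤ g` iff `u_f p ≤ u_g p` and `v_g q ≤ v_f q` for all rationals. -/
def le (f g : MP L) : Prop :=
  (∀ p : ℚ, f.u p ≤ g.u p) ∧ (∀ q : ℚ, g.v q ≤ f.v q)

/-- The sum of two pairs. -/
noncomputable def add (f g : MP L) : MP L where
  u := fun p => ⨆ t : ℚ, f.u t ⊓ g.u (p - t)
  v := fun q => ⨆ t : ℚ, f.v t ⊓ g.v (q - t)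

/-- The join of two pairs. -/
def sup (f g : MP L) : MP L where
  u := fun p => f.u p ⊔ g.u p
  v := fun q => f.v q ⊓ g.v q

/-- The negation of a pair. -/
def neg (f : MP L) : MP L where
  u := fun p => f.v (-p)
  v := fun q => f.u (-q)

end MP

/-- The zero pair `𝟎`. -/
noncomputable def zeroMP (L : Type*) [Order.Frame L] : MP L where
  u := fun p => if p < 0 then ⊤ else ⊥
  v := fun q => if q ≤ 0 then ⊥ else ⊤

/-- The scaled characteristic pair `r·χ_a`, for a rational `r` and a complemented
element `a` with complement `ac`. -/
noncomputable def sChi {L : Type*} [Order.Frame L] (r : ℚ) (a ac : L) : MP L where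
  u := fun p =>
    if 0 < r then (if p < 0 then ⊤ else if p < r then a else ⊥)
    else if r = 0 then (if p < 0 then ⊤ else ⊥)
    else (if p < r then ⊤ else if p < 0 then ac else ⊥)
  v := fun q =>
    if 0 < r then (if q ≤ 0 then ⊥ else if q ≤ r then ac else ⊤)
    else if r = 0 then (if q ≤ 0 then ⊥ else ⊤)
    else (if q ≤ r then ⊥ else if q ≤ 0 then a else ⊤)

/-- Iterated sum of a finite list of pairs. -/
noncomputable def sumMP {L : Type*} [Order.Frame L] : List (MP L) → MP L
  | [] => zeroMP L
  | [f] => f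
  | f :: g :: fs => f.add (sumMP (g :: fs))

namespace SimpleAdd
variable {L : Type*} [Order.Frame L]

theorem MP.ext' {f g : MP L} (hu : f.u = g.u) (hv : f.v = g.v) : f = g := by
  cases f; cases g; cases hu; cases hv; rfl

/-- canonical (simple-function) pair built from pieces. -/
noncomputable def canon {ι : Type*} (c : ι → L) (t : ι → ℚ) : MP L where
  u := fun p => ⨆ i, if p < t i then c i else ⊥
  v := fun q => ⨆ i, if t i < q then c i else ⊥

lemma Qu (A B y : ℚ) (c d : L) :
    (⨆ x : ℚ, (if x < A then c else ⊥) ⊓ (if y - x < B then d else ⊥))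
      = if y < A + B then c ⊓ d else ⊥ := by
  by_cases h : y < A + B
  · rw [if_pos h]
    refine le_antisymm (iSup_le fun x => ?_) ?_
    · split_ifs <;> simp
    · obtain ⟨x, hx1, hx2⟩ := exists_between (show y - B < A by linarith)
      have hx := le_iSup (fun x : ℚ => (if x < A then c else ⊥) ⊓ (if y - x < B then d else ⊥)) x
      rw [if_pos hx2, if_pos (by linarith : y - x < B)] at hx
      exact hx
  · rw [if_neg h]
    refine le_antisymm (iSup_le fun x => ?_) bot_le
    by_cases h1 : x < A
    · by_cases h2 : y - x < B
      · exact absurd (by linarith) h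
      · simp [h2]
    · simp [h1]

lemma Qv (A B y : ℚ) (c d : L) :
    (⨆ x : ℚ, (if A < x then c else ⊥) ⊓ (if B < y - x then d else ⊥))
      = if A + B < y then c ⊓ d else ⊥ := by
  by_cases h : A + B < y
  · rw [if_pos h]
    refine le_antisymm (iSup_le fun x => ?_) ?_
    · split_ifs <;> simp
    · obtain ⟨x, hx1, hx2⟩ := exists_between (show A < y - B by linarith)
      have hx := le_iSup (fun x : ℚ => (if A < x then c else ⊥) ⊓ (if B < y - x then d else ⊥)) x
      rw [if_pos hx1, if_pos (by linarith : B < y - x)] at hx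
      exact hx
  · rw [if_neg h]
    refine le_antisymm (iSup_le fun x => ?_) bot_le
    by_cases h1 : A < x
    · by_cases h2 : B < y - x
      · exact absurd (by linarith) h
      · simp [h2]
    · simp [h1]

lemma canon_add {ι κ : Type*} (c : ι → L) (t : ι → ℚ) (d : κ → L) (s : κ → ℚ) :
    (canon c t).add (canon d s)
      = canon (fun z : ι × κ => c z.1 ⊓ d z.2) (fun z => t z.1 + s z.2) := by
  refine MP.ext' (funext fun p => ?_) (funext fun q => ?_)
  · calc (⨆ x : ℚ, (⨆ i, if x < t i then c i else ⊥) ⊓ (⨆ j, if p - x < s j then d j else ⊥))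
        = ⨆ x : ℚ, ⨆ i, ⨆ j, (if x < t i then c i else ⊥) ⊓ (if p - x < s j then d j else ⊥) := by
          refine iSup_congr fun x => ?_
          rw [iSup_inf_eq]
          exact iSup_congr fun i => inf_iSup_eq _ _
      _ = ⨆ i, ⨆ x : ℚ, ⨆ j, (if x < t i then c i else ⊥) ⊓ (if p - x < s j then d j else ⊥) :=
          iSup_comm
      _ = ⨆ i, ⨆ j, ⨆ x : ℚ, (if x < t i then c i else ⊥) ⊓ (if p - x < s j then d j else ⊥) :=
          iSup_congr fun i => iSup_comm
      _ = ⨆ i, ⨆ j, if p < t i + s j then c i ⊓ d j else ⊥ :=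
          iSup_congr fun i => iSup_congr fun j => Qu _ _ _ _ _
      _ = ⨆ z : ι × κ, if p < t z.1 + s z.2 then c z.1 ⊓ d z.2 else ⊥ := (iSup_prod (f := fun z : ι × κ => if p < t z.1 + s z.2 then c z.1 ⊓ d z.2 else ⊥)).symm
  · calc (⨆ x : ℚ, (⨆ i, if t i < x then c i else ⊥) ⊓ (⨆ j, if s j < q - x then d j else ⊥))
        = ⨆ x : ℚ, ⨆ i, ⨆ j, (if t i < x then c i else ⊥) ⊓ (if s j < q - x then d j else ⊥) := by
          refine iSup_congr fun x => ?_
          rw [iSup_inf_eq]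
          exact iSup_congr fun i => inf_iSup_eq _ _
      _ = ⨆ i, ⨆ x : ℚ, ⨆ j, (if t i < x then c i else ⊥) ⊓ (if s j < q - x then d j else ⊥) :=
          iSup_comm
      _ = ⨆ i, ⨆ j, ⨆ x : ℚ, (if t i < x then c i else ⊥) ⊓ (if s j < q - x then d j else ⊥) :=
          iSup_congr fun i => iSup_comm
      _ = ⨆ i, ⨆ j, if t i + s j < q then c i ⊓ d j else ⊥ :=
          iSup_congr fun i => iSup_congr fun j => Qv _ _ _ _ _
      _ = ⨆ z : ι × κ, if t z.1 + s z.2 < q then c z.1 ⊓ d z.2 else ⊥ :=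
          (iSup_prod (f := fun z : ι × κ => if t z.1 + s z.2 < q then c z.1 ⊓ d z.2 else ⊥)).symm

/-- generic reindexing/collapsing of canonical pairs. -/
lemma canon_eq {ι ι' : Type*} {c : ι → L} {t : ι → ℚ} {c' : ι' → L} {t' : ι' → ℚ}
    (h1 : ∀ i, c i = ⊥ ∨ ∃ i', c' i' = c i ∧ t' i' = t i)
    (h2 : ∀ i', c' i' = ⊥ ∨ ∃ i, c i = c' i' ∧ t i = t' i') :
    canon c t = canon c' t' := by
  refine MP.ext' (funext fun p => ?_) (funext fun q => ?_)
  · refine le_antisymm (iSup_le fun i => ?_) (iSup_le fun i' => ?_)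
    · rcases h1 i with h | ⟨i', hc, ht⟩
      · split_ifs <;> simp [h]
      · refine le_trans ?_ (le_iSup _ i'); rw [hc, ht]
    · rcases h2 i' with h | ⟨i, hc, ht⟩
      · split_ifs <;> simp [h]
      · refine le_trans ?_ (le_iSup _ i); rw [hc, ht]
  · refine le_antisymm (iSup_le fun i => ?_) (iSup_le fun i' => ?_)
    · rcases h1 i with h | ⟨i', hc, ht⟩
      · split_ifs <;> simp [h]
      · refine le_trans ?_ (le_iSup _ i'); rw [hc, ht]
    · rcases h2 i' with h | ⟨i, hc, ht⟩
      · split_ifs <;> simp [h]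
      · refine le_trans ?_ (le_iSup _ i); rw [hc, ht]

lemma zero_eq_canon : zeroMP L = canon (fun _ : Unit => (⊤ : L)) (fun _ => 0) := by
  refine MP.ext' (funext fun p => ?_) (funext fun q => ?_)
  · show (if p < 0 then (⊤:L) else ⊥) = ⨆ _ : Unit, (if p < 0 then (⊤:L) else ⊥)
    rw [iSup_const]
  · show (if q ≤ 0 then (⊥:L) else ⊤) = ⨆ _ : Unit, (if (0:ℚ) < q then (⊤:L) else ⊥)
    rw [iSup_const]
    by_cases h : q ≤ 0
    · simp [h, not_lt.mpr h]
    · simp [h, lt_of_not_ge h]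

lemma canon_add_zero {ι : Type*} (c : ι → L) (t : ι → ℚ) :
    (canon c t).add (zeroMP L) = canon c t := by
  rw [zero_eq_canon, canon_add]
  refine canon_eq (fun z => Or.inr ⟨z.1, ?_, ?_⟩) (fun i => Or.inr ⟨(i, ()), ?_, ?_⟩) <;>
    simp

lemma sumMP_cons (f : MP L) (l : List (MP L)) (h : f.add (zeroMP L) = f) :
    sumMP (f :: l) = f.add (sumMP l) := by
  cases l with
  | nil => show f = f.add (zeroMP L); exact h.symm
  | cons g gs => rfl

lemma le_compl_of_disjoint {a b bc : L} (h : a ⊓ b = ⊥) (h2 : b ⊔ bc = ⊤) : a ≤ bc := by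
  have : a = a ⊓ bc := by
    conv_lhs => rw [← inf_top_eq a, ← h2, inf_sup_left, h, bot_sup_eq]
  rw [this]; exact inf_le_right

lemma iInf_compl_bot {ι : Type*} (a ac : ι → L) (hd : ∀ i, a i ⊓ ac i = ⊥)
    (hcov : (⨆ i, a i) = ⊤) : (⨅ i, ac i) = ⊥ := by
  have : (⨅ i, ac i) = (⨅ i, ac i) ⊓ ⨆ i, a i := by rw [hcov, inf_top_eq]
  rw [this, inf_iSup_eq]
  refine le_bot_iff.mp (iSup_le fun i => ?_)
  calc (⨅ j, ac j) ⊓ a i ≤ ac i ⊓ a i := inf_le_inf_right _ (iInf_le _ i)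
  _ = ⊥ := by rw [inf_comm, hd i]

lemma iInf_sup_compl {ι : Type*} (x : L) (b bc : ι → L) (hd : ∀ j, b j ⊓ bc j = ⊥)
    (hcov : (⨆ j, b j) = ⊤) : (⨅ j, x ⊔ bc j) = x := by
  refine le_antisymm ?_ (le_iInf fun j => le_sup_left)
  have : (⨅ j, x ⊔ bc j) = (⨅ j, x ⊔ bc j) ⊓ ⨆ j, b j := by rw [hcov, inf_top_eq]
  rw [this, inf_iSup_eq]
  refine iSup_le fun j => ?_
  calc (⨅ j', x ⊔ bc j') ⊓ b j ≤ (x ⊔ bc j) ⊓ b j := inf_le_inf_right _ (iInf_le _ j)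
  _ = (x ⊓ b j) ⊔ (bc j ⊓ b j) := by rw [inf_sup_right]
  _ ≤ x := by rw [inf_comm (bc j), hd j, sup_bot_eq]; exact inf_le_left

lemma iInf_fin_succ {n : ℕ} (f : Fin (n + 1) → L) :
    (⨅ i, f i) = f 0 ⊓ ⨅ i : Fin n, f i.succ :=
  le_antisymm (le_inf (iInf_le _ 0) (le_iInf fun i => iInf_le _ _))
    (le_iInf fun i => Fin.cases inf_le_left
      (fun i₀ => le_trans inf_le_right (iInf_le _ i₀)) i)

lemma sChi_eq_canon (r : ℚ) (a ac : L) (h : a ⊔ ac = ⊤) :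
    sChi r a ac
      = canon (fun o : Option Unit => o.elim ac (fun _ => a))
          (fun o => o.elim 0 (fun _ => r)) := by
  refine MP.ext' (funext fun p => ?_) (funext fun q => ?_)
  · show (sChi r a ac).u p
      = ⨆ o : Option Unit,
          if p < Option.elim o 0 (fun _ => r) then Option.elim o ac (fun _ => a) else ⊥
    rw [iSup_option]
    simp only [Option.elim_none, Option.elim_some]
    show (sChi r a ac).u p = (if p < 0 then ac else ⊥) ⊔ ⨆ _ : Unit, (if p < r then a else ⊥)
    rw [iSup_const]
    simp only [sChi]
    rcases lt_trichotomy r 0 with hr | hr | hr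
    · rw [if_neg (by linarith), if_neg (by linarith)]
      by_cases h1 : p < r
      · rw [if_pos h1, if_pos h1, if_pos (by linarith : p < 0), sup_comm, h]
      · rw [if_neg h1, if_neg h1, sup_bot_eq]
    · subst hr
      rw [if_neg (lt_irrefl 0), if_pos rfl]
      by_cases h1 : p < 0
      · rw [if_pos h1, if_pos h1, if_pos h1, sup_comm, h]
      · rw [if_neg h1, if_neg h1, if_neg h1, sup_bot_eq]
    · rw [if_pos hr]
      by_cases h1 : p < 0
      · rw [if_pos h1, if_pos h1, if_pos (by linarith : p < r), sup_comm, h]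
      · rw [if_neg h1, if_neg h1, bot_sup_eq]
  · show (sChi r a ac).v q
      = ⨆ o : Option Unit,
          if Option.elim o 0 (fun _ => r) < q then Option.elim o ac (fun _ => a) else ⊥
    rw [iSup_option]
    simp only [Option.elim_none, Option.elim_some]
    show (sChi r a ac).v q = (if 0 < q then ac else ⊥) ⊔ ⨆ _ : Unit, (if r < q then a else ⊥)
    rw [iSup_const]
    simp only [sChi]
    rcases lt_trichotomy r 0 with hr | hr | hr
    · rw [if_neg (by linarith), if_neg (by linarith)]
      by_cases h1 : q ≤ r
      · rw [if_pos h1, if_neg (not_lt.mpr h1), if_neg (by linarith : ¬ (0:ℚ) < q), sup_bot_eq]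
      · rw [if_neg h1]
        by_cases h2 : q ≤ 0
        · rw [if_pos h2, if_neg (not_lt.mpr h2), if_pos (lt_of_not_ge h1), bot_sup_eq]
        · rw [if_neg h2, if_pos (lt_of_not_ge h2), if_pos (by linarith : r < q), sup_comm ac a, h]
    · subst hr
      rw [if_neg (lt_irrefl 0), if_pos rfl]
      by_cases h1 : q ≤ 0
      · rw [if_pos h1, if_neg (not_lt.mpr h1), if_neg (not_lt.mpr h1), sup_bot_eq]
      · rw [if_neg h1, if_pos (lt_of_not_ge h1), if_pos (lt_of_not_ge h1), sup_comm ac a, h]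
    · rw [if_pos hr]
      by_cases h1 : q ≤ 0
      · rw [if_pos h1, if_neg (not_lt.mpr h1), if_neg (by linarith : ¬ r < q), sup_bot_eq]
      · rw [if_neg h1]
        by_cases h2 : q ≤ r
        · rw [if_pos h2, if_pos (lt_of_not_ge h1), if_neg (not_lt.mpr h2), sup_bot_eq]
        · rw [if_neg h2, if_pos (lt_of_not_ge h1), if_pos (lt_of_not_ge h2), sup_comm, h]

lemma sum_canon {κ : Type*} (n : ℕ) (a ac : Fin n → L) (x : Fin n → κ → L)
    (τ : Fin n → κ → ℚ)
    (hcod : ∀ i, a i ⊔ ac i = ⊤) (hdisj : ∀ i j, i ≠ j → a i ⊓ a j = ⊥)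
    (hx : ∀ i k, x i k ≤ a i) :
    sumMP (List.ofFn fun i => canon (fun o : Option κ => o.elim (ac i) (x i))
        (fun o => o.elim 0 (τ i)))
      = canon (fun o : Option (Fin n × κ) => o.elim (⨅ i, ac i) (fun z => x z.1 z.2))
          (fun o => o.elim 0 (fun z => τ z.1 z.2)) := by
  induction n with
  | zero =>
      rw [List.ofFn_zero]
      rw [show sumMP ([] : List (MP L)) = zeroMP L from rfl, zero_eq_canon]
      refine canon_eq (fun _ => Or.inr ⟨none, (iInf_of_empty _), rfl⟩) (fun o => ?_)
      cases o with
      | none => exact Or.inr ⟨(), (iInf_of_empty _).symm, rfl⟩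
      | some z => exact z.1.elim0
  | succ n ih =>
      simp only [List.ofFn_succ]
      rw [sumMP_cons _ _ (canon_add_zero _ _)]
      rw [ih (fun i => a i.succ) (fun i => ac i.succ) (fun i => x i.succ) (fun i => τ i.succ)
          (fun i => hcod _) (fun i j hij => hdisj _ _ (fun e => hij (Fin.succ_injective n e)))
          (fun i k => hx _ k)]
      rw [canon_add]
      have hle0 : ∀ (z : Fin n × κ), x z.1.succ z.2 ≤ ac 0 := fun z =>
        (hx _ _).trans (le_compl_of_disjoint (hdisj z.1.succ 0 (Fin.succ_ne_zero z.1)) (hcod 0))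
      have hleS : ∀ k : κ, x 0 k ≤ ⨅ i : Fin n, ac i.succ := fun k =>
        le_iInf fun i => (hx 0 k).trans
          (le_compl_of_disjoint (hdisj 0 i.succ (Fin.succ_ne_zero i).symm) (hcod i.succ))
      refine canon_eq ?_ ?_
      · rintro ⟨(_ | k), (_ | z)⟩
        · exact Or.inr ⟨none, iInf_fin_succ ac, by norm_num⟩
        · exact Or.inr ⟨some (z.1.succ, z.2), (inf_eq_right.mpr (hle0 z)).symm, (zero_add _).symm⟩
        · exact Or.inr ⟨some (0, k), (inf_eq_left.mpr (hleS k)).symm, (add_zero _).symm⟩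
        · refine Or.inl (le_bot_iff.mp ?_)
          exact (inf_le_inf (hx 0 k) (hx _ _)).trans
            (hdisj 0 z.1.succ (Fin.succ_ne_zero z.1).symm).le
      · rintro (_ | ⟨i, k⟩)
        · exact Or.inr ⟨(none, none), (iInf_fin_succ ac).symm, by norm_num⟩
        · induction i using Fin.cases with
          | zero => exact Or.inr ⟨(some k, none), inf_eq_left.mpr (hleS k), add_zero _⟩
          | succ i0 => exact Or.inr ⟨(none, some (i0, k)), inf_eq_right.mpr (hle0 (i0, k)),
              zero_add _⟩

end SimpleAdd

open SimpleAdd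

/-- The sum of two simple functions given by representations with pairwise disjoint
complemented elements covering `⊤` is the simple function
`Σ_i Σ_j (r_i + s_j)·χ_{a_i ⊓ b_j}`; in particular the sum of two measurable simple
functions is simple. -/
theorem add_simple_eq_double_sum {L : Type*} [Order.Frame L] (n m : ℕ)
    (r : Fin n → ℚ) (s : Fin m → ℚ)
    (a ac : Fin n → L) (ha : ∀ i, IsCompl (a i) (ac i))
    (hadisj : ∀ i j, i ≠ j → a i ⊓ a j = ⊥) (hacov : (⨆ i, a i) = ⊤)
    (b bc : Fin m → L) (hb : ∀ j, IsCompl (b j) (bc j))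
    (hbdisj : ∀ i j, i ≠ j → b i ⊓ b j = ⊥) (hbcov : (⨆ j, b j) = ⊤) :
    (sumMP (List.ofFn fun i => sChi (r i) (a i) (ac i))).add
        (sumMP (List.ofFn fun j => sChi (s j) (b j) (bc j))) =
      sumMP (List.ofFn fun i => sumMP (List.ofFn fun j =>
        sChi (r i + s j) (a i ⊓ b j) (ac i ⊔ bc j))) := by
  have hat : ∀ i, a i ⊔ ac i = ⊤ := fun i => (ha i).sup_eq_top
  have hab : ∀ i, a i ⊓ ac i = ⊥ := fun i => (ha i).inf_eq_bot
  have hbt : ∀ j, b j ⊔ bc j = ⊤ := fun j => (hb j).sup_eq_top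
  have hbb : ∀ j, b j ⊓ bc j = ⊥ := fun j => (hb j).inf_eq_bot
  have hacB : (⨅ i, ac i) = ⊥ := iInf_compl_bot a ac hab hacov
  have hbcB : (⨅ j, bc j) = ⊥ := iInf_compl_bot b bc hbb hbcov
  have hL : sumMP (List.ofFn fun i => sChi (r i) (a i) (ac i))
      = canon (fun o : Option (Fin n × Unit) => o.elim (⨅ i, ac i) (fun z => a z.1))
          (fun o => o.elim 0 (fun z => r z.1)) := by
    rw [show (List.ofFn fun i => sChi (r i) (a i) (ac i))
        = List.ofFn fun i => canon (fun o : Option Unit => o.elim (ac i) (fun _ => a i))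
            (fun o => o.elim 0 (fun _ => r i)) from
      congrArg _ (funext fun i => sChi_eq_canon _ _ _ (hat i))]
    exact sum_canon n a ac (fun i _ => a i) (fun i _ => r i) hat hadisj (fun i k => le_rfl)
  have hR : sumMP (List.ofFn fun j => sChi (s j) (b j) (bc j))
      = canon (fun o : Option (Fin m × Unit) => o.elim (⨅ j, bc j) (fun z => b z.1))
          (fun o => o.elim 0 (fun z => s z.1)) := by
    rw [show (List.ofFn fun j => sChi (s j) (b j) (bc j))
        = List.ofFn fun j => canon (fun o : Option Unit => o.elim (bc j) (fun _ => b j))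
            (fun o => o.elim 0 (fun _ => s j)) from
      congrArg _ (funext fun j => sChi_eq_canon _ _ _ (hbt j))]
    exact sum_canon m b bc (fun j _ => b j) (fun j _ => s j) hbt hbdisj (fun j k => le_rfl)
  have hLT : (sumMP (List.ofFn fun i => sChi (r i) (a i) (ac i))).add
        (sumMP (List.ofFn fun j => sChi (s j) (b j) (bc j)))
      = canon (fun z : Fin n × Fin m => a z.1 ⊓ b z.2) (fun z => r z.1 + s z.2) := by
    rw [hL, hR, canon_add]
    refine canon_eq ?_ ?_
    · rintro ⟨(_ | z), (_ | w)⟩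
      · exact Or.inl (by simp [hacB])
      · exact Or.inl (by simp [hacB])
      · exact Or.inl (by simp [hbcB])
      · exact Or.inr ⟨(z.1, w.1), rfl, rfl⟩
    · rintro ⟨i, j⟩
      exact Or.inr ⟨(some (i, ()), some (j, ())), rfl, rfl⟩
  have hInner : ∀ i, sumMP (List.ofFn fun j => sChi (r i + s j) (a i ⊓ b j) (ac i ⊔ bc j))
      = canon (fun o : Option (Fin m) => o.elim (ac i) (fun j => a i ⊓ b j))
          (fun o => o.elim 0 (fun j => r i + s j)) := by
    intro i
    have hcod2 : ∀ j, (a i ⊓ b j) ⊔ (ac i ⊔ bc j) = ⊤ := by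
      intro j
      calc (a i ⊓ b j) ⊔ (ac i ⊔ bc j) = ((a i ⊓ b j) ⊔ ac i) ⊔ bc j := by rw [sup_assoc]
        _ = ((a i ⊔ ac i) ⊓ (b j ⊔ ac i)) ⊔ bc j := by rw [sup_inf_right]
        _ = (b j ⊔ ac i) ⊔ bc j := by rw [hat i, top_inf_eq]
        _ = (b j ⊔ bc j) ⊔ ac i := by rw [sup_right_comm]
        _ = ⊤ := by rw [hbt j, top_sup_eq]
    have hdisj2 : ∀ j j', j ≠ j' → (a i ⊓ b j) ⊓ (a i ⊓ b j') = ⊥ := fun j j' hjj =>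
      le_bot_iff.mp ((inf_le_inf inf_le_right inf_le_right).trans (hbdisj j j' hjj).le)
    rw [show (List.ofFn fun j => sChi (r i + s j) (a i ⊓ b j) (ac i ⊔ bc j))
        = List.ofFn fun j => canon
            (fun o : Option Unit => o.elim (ac i ⊔ bc j) (fun _ => a i ⊓ b j))
            (fun o => o.elim 0 (fun _ => r i + s j)) from
      congrArg _ (funext fun j => sChi_eq_canon _ _ _ (hcod2 j))]
    rw [sum_canon m (fun j => a i ⊓ b j) (fun j => ac i ⊔ bc j) (fun j _ => a i ⊓ b j)
        (fun j _ => r i + s j) hcod2 hdisj2 (fun j k => le_rfl)]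
    have hinf : (⨅ j, ac i ⊔ bc j) = ac i := iInf_sup_compl (ac i) b bc hbb hbcov
    refine canon_eq ?_ ?_
    · rintro (_ | z)
      · exact Or.inr ⟨none, hinf.symm, rfl⟩
      · exact Or.inr ⟨some z.1, rfl, rfl⟩
    · rintro (_ | j)
      · exact Or.inr ⟨none, hinf, rfl⟩
      · exact Or.inr ⟨some (j, ()), rfl, rfl⟩
  have hRT : sumMP (List.ofFn fun i => sumMP (List.ofFn fun j =>
        sChi (r i + s j) (a i ⊓ b j) (ac i ⊔ bc j)))
      = canon (fun z : Fin n × Fin m => a z.1 ⊓ b z.2) (fun z => r z.1 + s z.2) := by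
    rw [show (List.ofFn fun i => sumMP (List.ofFn fun j =>
          sChi (r i + s j) (a i ⊓ b j) (ac i ⊔ bc j)))
        = List.ofFn fun i => canon
            (fun o : Option (Fin m) => o.elim (ac i) (fun j => a i ⊓ b j))
            (fun o => o.elim 0 (fun j => r i + s j)) from
      congrArg _ (funext hInner)]
    rw [sum_canon n a ac (fun i j => a i ⊓ b j) (fun i j => r i + s j) hat hadisj
        (fun i j => inf_le_left)]
    refine canon_eq ?_ ?_
    · rintro (_ | z)
      · exact Or.inl (by simp [hacB])
      · exact Or.inr ⟨(z.1, z.2), rfl, rfl⟩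
    · rintro ⟨i, j⟩
      exact Or.inr ⟨some (i, j), rfl, rfl⟩
  exact hLT.trans hRT.symm
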